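/- Let f₀, f₁, f₂ be natural numbers with f₂ ≥ 1 satisfying the Euler relation f₀ + f₂ = f₁ + 2. Then every complex root of the cubic polynomial p(X) = f₂·X³ + f₁·X² + f₀·X + 2 (viewed in ℝ[X], with roots taken in ℂ) is real if and only if (f₀ + 2)² ≥ 8·(f₁ + 2). -/

import Mathlib

open Polynomial

/-- For natural numbers `f₀, f₁, f₂` with `f₂ ≥ 1` satisfying Euler's relation
`f₀ + f₂ = f₁ + 2`, every complex root of the Euler polynomial
`p(X) = f₂·X³ + f₁·X² + f₀·X + 2 ∈ ℝ[X]` is real iff `(f₀ + 2)² ≥ 8·(f₁ + 2)`. -/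
theorem euler_polynomial_all_roots_real_iff (f₀ f₁ f₂ : ℕ) (hf₂ : 1 ≤ f₂)
    (heuler : f₀ + f₂ = f₁ + 2) :
    (∀ z : ℂ,
        ((C (f₂ : ℝ) * X ^ 3 + C (f₁ : ℝ) * X ^ 2 + C (f₀ : ℝ) * X + C 2).map
            (algebraMap ℝ ℂ)).IsRoot z → z.im = 0) ↔
      (f₀ + 2) ^ 2 ≥ 8 * (f₁ + 2) := by
  have hf₂R : (0:ℝ) < (f₂:ℝ) := by exact_mod_cast hf₂
  have hA : (f₂ : ℂ) ≠ 0 := by exact_mod_cast hf₂R.ne'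
  have hf0C : (f₀ : ℂ) + f₂ = (f₁ : ℂ) + 2 := by exact_mod_cast heuler
  have hf0R : (f₀ : ℝ) + f₂ = (f₁ : ℝ) + 2 := by exact_mod_cast heuler
  set B : ℂ := (f₁ : ℂ) - (f₂ : ℂ) with hB
  -- root characterization
  have hroot : ∀ z : ℂ,
      ((C (f₂ : ℝ) * X ^ 3 + C (f₁ : ℝ) * X ^ 2 + C (f₀ : ℝ) * X + C 2).map
          (algebraMap ℝ ℂ)).IsRoot z ↔
        z = -1 ∨ (f₂:ℂ) * z^2 + B * z + 2 = 0 := by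
    intro z
    have : ((C (f₂ : ℝ) * X ^ 3 + C (f₁ : ℝ) * X ^ 2 + C (f₀ : ℝ) * X + C 2).map
          (algebraMap ℝ ℂ)).IsRoot z ↔
        (f₂:ℂ) * z^3 + (f₁:ℂ) * z^2 + (f₀:ℂ) * z + 2 = 0 := by
      simp [IsRoot.def, Polynomial.map_add, Polynomial.map_mul, Polynomial.map_pow,
        Complex.coe_algebraMap]
    rw [this]
    have hfac : (f₂:ℂ) * z^3 + (f₁:ℂ) * z^2 + (f₀:ℂ) * z + 2
        = (z + 1) * ((f₂:ℂ) * z^2 + B * z + 2) := by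
      rw [hB]; linear_combination (z) * hf0C
    rw [hfac, mul_eq_zero]
    constructor
    · rintro (h | h)
      · left; exact eq_neg_of_add_eq_zero_left h
      · right; exact h
    · rintro (h | h)
      · left; rw [h]; ring
      · right; exact h
  have hdisc : discrim (f₂:ℂ) B 2 = ((((f₁:ℝ) - f₂)^2 - 8 * f₂ : ℝ) : ℂ) := by
    rw [discrim, hB]; push_cast; ring
  -- condition equivalence
  have hcond : ((f₀ + 2) ^ 2 ≥ 8 * (f₁ + 2)) ↔ (0:ℝ) ≤ ((f₁:ℝ) - f₂)^2 - 8 * f₂ := by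
    rw [ge_iff_le, ← Nat.cast_le (α := ℝ)]
    push_cast
    constructor <;> intro h <;> nlinarith [h, hf0R]
  rw [hcond]
  constructor
  · intro hall
    by_contra hneg
    push_neg at hneg
    set d : ℝ := ((f₁:ℝ) - f₂)^2 - 8 * f₂ with hd
    have hdpos : 0 < -d := by linarith
    set s : ℝ := Real.sqrt (-d) with hs
    have hspos : 0 < s := Real.sqrt_pos.mpr hdpos
    have hsq : discrim (f₂:ℂ) B 2 = (Complex.I * s) * (Complex.I * s) := by
      rw [hdisc]
      have : (Complex.I * s) * (Complex.I * s) = -((s:ℂ) * s) := by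
        ring_nf; rw [Complex.I_sq]; ring
      rw [this]
      have hss : (s:ℝ) * s = -d := Real.mul_self_sqrt hdpos.le
      rw [← Complex.ofReal_mul, hss]
      push_cast
      ring
    set z : ℂ := (-B + Complex.I * s) / (2 * (f₂:ℂ)) with hz
    have hzr : (f₂:ℂ) * z^2 + B * z + 2 = 0 := by
      rw [pow_two, quadratic_eq_zero_iff hA hsq z]; left; rfl
    have := hall z ((hroot z).mpr (Or.inr hzr))
    have h2f : ((2 * (f₂:ℝ) : ℝ) : ℂ) = 2 * (f₂:ℂ) := by push_cast; ring
    rw [hz, ← h2f, Complex.div_ofReal_im] at this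
    have him : (-B + Complex.I * s).im = s := by
      rw [hB]; simp
    rw [him] at this
    have : s = 0 := by
      field_simp at this
      simpa using this
    linarith
  · intro hpos z hzr
    rcases (hroot z).mp hzr with h | h
    · rw [h]; simp
    · set s : ℝ := Real.sqrt (((f₁:ℝ) - f₂)^2 - 8 * f₂) with hs
      have hsq : discrim (f₂:ℂ) B 2 = (s:ℂ) * (s:ℂ) := by
        rw [hdisc]
        rw [← Complex.ofReal_mul, Real.mul_self_sqrt hpos]
      rw [pow_two] at h
      rcases (quadratic_eq_zero_iff hA hsq z).mp h with h' | h'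
      all_goals {
        rw [h', hB]
        have : ((2 * (f₂:ℝ) : ℝ) : ℂ) = 2 * (f₂:ℂ) := by push_cast; ring
        rw [← this, Complex.div_ofReal_im]
        simp
      }
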